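/- Let A be an abelian group and let π₁, π₂, π₃, π₄ be additive endomorphisms of A that are idempotent, pairwise orthogonal (πᵢ∘πⱼ = 0 for i ≠ j) and satisfy π₁ + π₂ + π₃ + π₄ = id. Let s ∈ A with π₁(s) = 0 and π₂(s) = 0. Then the binary operation a * b := π₁(b) + π₂(a) + π₃(a) + π₃(b) + s on A is associative and distributes over the heap bracket: a * (b − c + d) = a*b − a*c + a*d and (a − b + c) * d = a*d − b*d + c*d for all a, b, c, d ∈ A. -/
import Mathlib

/-- Given a decomposition of an abelian group `A` into four summands by
orthogonal idempotent projections `π₁, π₂, π₃, π₄` summing to the identity, and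
`s ∈ A` with `π₁(s) = 0 = π₂(s)`, the operation
`a * b = π₁(b) + π₂(a) + π₃(a) + π₃(b) + s` is associative and distributes over
the heap bracket. -/
theorem zero_mult_truss {A : Type*} [AddCommGroup A]
    (π₁ π₂ π₃ π₄ : A →+ A)
    (h₁ : ∀ a : A, π₁ (π₁ a) = π₁ a) (h₂ : ∀ a : A, π₂ (π₂ a) = π₂ a)
    (h₃ : ∀ a : A, π₃ (π₃ a) = π₃ a) (h₄ : ∀ a : A, π₄ (π₄ a) = π₄ a)
    (h₁₂ : ∀ a : A, π₁ (π₂ a) = 0) (h₂₁ : ∀ a : A, π₂ (π₁ a) = 0)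
    (h₁₃ : ∀ a : A, π₁ (π₃ a) = 0) (h₃₁ : ∀ a : A, π₃ (π₁ a) = 0)
    (h₁₄ : ∀ a : A, π₁ (π₄ a) = 0) (h₄₁ : ∀ a : A, π₄ (π₁ a) = 0)
    (h₂₃ : ∀ a : A, π₂ (π₃ a) = 0) (h₃₂ : ∀ a : A, π₃ (π₂ a) = 0)
    (h₂₄ : ∀ a : A, π₂ (π₄ a) = 0) (h₄₂ : ∀ a : A, π₄ (π₂ a) = 0)
    (h₃₄ : ∀ a : A, π₃ (π₄ a) = 0) (h₄₃ : ∀ a : A, π₄ (π₃ a) = 0)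
    (hsum : ∀ a : A, π₁ a + π₂ a + π₃ a + π₄ a = a)
    (s : A) (hs₁ : π₁ s = 0) (hs₂ : π₂ s = 0) :
    (∀ a b c : A,
      π₁ c + π₂ (π₁ b + π₂ a + π₃ a + π₃ b + s)
        + π₃ (π₁ b + π₂ a + π₃ a + π₃ b + s) + π₃ c + s
      = π₁ (π₁ c + π₂ b + π₃ b + π₃ c + s) + π₂ a + π₃ a
        + π₃ (π₁ c + π₂ b + π₃ b + π₃ c + s) + s) ∧
    (∀ a b c d : A,
      π₁ (b - c + d) + π₂ a + π₃ a + π₃ (b - c + d) + s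
        = (π₁ b + π₂ a + π₃ a + π₃ b + s) - (π₁ c + π₂ a + π₃ a + π₃ c + s)
            + (π₁ d + π₂ a + π₃ a + π₃ d + s)) ∧
    (∀ a b c d : A,
      π₁ d + π₂ (a - b + c) + π₃ (a - b + c) + π₃ d + s
        = (π₁ d + π₂ a + π₃ a + π₃ d + s) - (π₁ d + π₂ b + π₃ b + π₃ d + s)
            + (π₁ d + π₂ c + π₃ c + π₃ d + s)) := by
  refine ⟨fun a b c => ?_, fun a b c d => ?_, fun a b c d => ?_⟩ <;>
    simp [map_add, map_sub, h₁, h₂, h₃, h₄, h₁₂, h₂₁, h₁₃, h₃₁, h₁₄, h₄₁,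
      h₂₃, h₃₂, h₂₄, h₄₂, h₃₄, h₄₃, hs₁, hs₂] <;> abel
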